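/- arXiv:2010.02776 — 6 statements merged into one kernel-verified Lean document; each statement's English description precedes it below -/
import Mathlib

section
/- Let α = π/j for an integer j ≥ 2, and set N = 2n − 1 if j = 2n is even and N = 2n if j = 2n + 1 is odd (so that 2α(N+1) = 2π). Then ∑_{k=1}^{N} 1/sin²(kα) = (π²/α² − 1)/3, i.e. ∑_{k=1}^{j−1} 1/sin²(kπ/j) = (j² − 1)/3. -/
open Real Finset Complex

lemma poly_id (n : ℕ) (z : ℂ) :
    (1 - z) * ∑ m ∈ Finset.range n, (m : ℂ) * z ^ m
      = (∑ m ∈ Finset.range n, z ^ m) - 1 - ((n : ℂ) - 1) * z ^ n := by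
  induction n with
  | zero => simp
  | succ n ih =>
    rw [Finset.sum_range_succ, Finset.sum_range_succ]
    push_cast
    linear_combination ih

lemma sum_id' (n : ℕ) : ∑ m ∈ Finset.range n, (m : ℂ) = n * (n - 1) / 2 := by
  induction n with
  | zero => simp
  | succ n ih =>
    rw [Finset.sum_range_succ]
    push_cast
    linear_combination ih

lemma sum_sq' (n : ℕ) : ∑ m ∈ Finset.range n, (m : ℂ) ^ 2 = n * (n - 1) * (2 * n - 1) / 6 := by
  induction n with
  | zero => simp
  | succ n ih =>
    rw [Finset.sum_range_succ]
    push_cast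
    linear_combination ih

lemma geom_orth (n : ℕ) (hn : 0 < n) (m : ℕ) :
    ∑ k ∈ Finset.range n, Complex.exp (2 * π * Complex.I / n) ^ (k * m)
      = if n ∣ m then (n : ℂ) else 0 := by
  set ζ := Complex.exp (2 * π * Complex.I / n) with hζdef
  have hζ : IsPrimitiveRoot ζ n := Complex.isPrimitiveRoot_exp n hn.ne'
  simp only [pow_mul']
  by_cases h : n ∣ m
  · rw [if_pos h]
    have : ζ ^ m = 1 := (hζ.pow_eq_one_iff_dvd m).mpr h
    simp [this]
  · rw [if_neg h]
    have h1 : ζ ^ m ≠ 1 := fun hh => h ((hζ.pow_eq_one_iff_dvd m).mp hh)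
    rw [geom_sum_eq h1]
    have : (ζ ^ m) ^ n = 1 := by
      rw [← pow_mul, mul_comm, pow_mul, hζ.pow_eq_one, one_pow]
    simp [this]

theorem sum_inv_sin_sq (j : ℕ) (hj : 2 ≤ j) :
    ∑ k ∈ Finset.Icc 1 (j - 1), 1 / Real.sin (k * π / j) ^ 2 = ((j : ℝ) ^ 2 - 1) / 3 := by
  have hj0 : 0 < j := by omega
  have hjC : (j : ℂ) ≠ 0 := Nat.cast_ne_zero.mpr hj0.ne'
  have hjR : (j : ℝ) ≠ 0 := Nat.cast_ne_zero.mpr hj0.ne'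
  set ζ : ℂ := Complex.exp (2 * π * Complex.I / j) with hζdef
  have hζ : IsPrimitiveRoot ζ j := Complex.isPrimitiveRoot_exp j hj0.ne'
  set S : ℕ → ℂ := fun k => ∑ m ∈ Finset.range j, (m : ℂ) * ζ ^ (k * m) with hSdef
  -- S 0
  have hS0 : S 0 = (j : ℂ) * ((j : ℂ) - 1) / 2 := by
    simp only [hSdef, zero_mul, pow_zero, mul_one]
    exact sum_id' j
  -- sum of S over range j is 0
  have hsumS : ∑ k ∈ Finset.range j, S k = 0 := by
    simp only [hSdef]
    rw [Finset.sum_comm]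
    apply Finset.sum_eq_zero
    intro m hm
    rw [← Finset.mul_sum]
    rw [geom_orth j hj0 m]
    rcases Nat.eq_zero_or_pos m with h | h
    · simp [h]
    · have : ¬ j ∣ m := by
        intro hd
        have := Nat.le_of_dvd h hd
        have := Finset.mem_range.mp hm
        omega
      simp [this]
  -- sum of S^2 over range j
  have hsumS2 : ∑ k ∈ Finset.range j, (S k) ^ 2
      = (j : ℂ) ^ 2 * ((j : ℂ) ^ 2 - 1) / 6 := by
    have step1 : ∀ k, (S k) ^ 2
        = ∑ m ∈ Finset.range j, ∑ l ∈ Finset.range j, ((m : ℂ) * l) * ζ ^ (k * (m + l)) := by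
      intro k
      rw [sq, hSdef]
      rw [Finset.sum_mul_sum]
      apply Finset.sum_congr rfl
      intro m _
      apply Finset.sum_congr rfl
      intro l _
      rw [Nat.mul_add, pow_add]
      ring
    calc ∑ k ∈ Finset.range j, (S k) ^ 2
        = ∑ m ∈ Finset.range j, ∑ l ∈ Finset.range j, ((m : ℂ) * l)
            * (if j ∣ (m + l) then (j : ℂ) else 0) := by
          simp only [step1]
          rw [Finset.sum_comm]
          apply Finset.sum_congr rfl
          intro m _
          rw [Finset.sum_comm]
          apply Finset.sum_congr rfl
          intro l _
          rw [← Finset.mul_sum, geom_orth j hj0 (m + l)]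
      _ = ∑ m ∈ Finset.range j, (j : ℂ) * m * ((j : ℂ) - m) := by
          apply Finset.sum_congr rfl
          intro m hm
          have hmj : m < j := Finset.mem_range.mp hm
          rcases Nat.eq_zero_or_pos m with h0 | h0
          · simp [h0]
          · rw [Finset.sum_eq_single_of_mem (j - m)]
            · have hjm : m + (j - m) = j := by omega
              rw [hjm, if_pos dvd_rfl]
              have : ((j - m : ℕ) : ℂ) = (j : ℂ) - m := by
                push_cast [Nat.cast_sub hmj.le]
                ring
              rw [this]
              ring
            · exact Finset.mem_range.mpr (by omega)
            · intro l hl hne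
              have hlj : l < j := Finset.mem_range.mp hl
              have : ¬ j ∣ (m + l) := by
                intro hd
                have h1 : j ≤ m + l := Nat.le_of_dvd (by omega) hd
                have h2 : j ∣ (m + l - j) := (Nat.dvd_sub hd dvd_rfl)
                have h3 : m + l - j = 0 := Nat.eq_zero_of_dvd_of_lt h2 (by omega)
                omega
              simp [this]
      _ = (j : ℂ) ^ 2 * ((j : ℂ) ^ 2 - 1) / 6 := by
          have e : ∑ m ∈ Finset.range j, (j : ℂ) * m * ((j : ℂ) - m)
              = (j : ℂ) ^ 2 * (∑ m ∈ Finset.range j, (m : ℂ))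
                - (j : ℂ) * (∑ m ∈ Finset.range j, (m : ℂ) ^ 2) := by
            rw [Finset.mul_sum, Finset.mul_sum, ← Finset.sum_sub_distrib]
            apply Finset.sum_congr rfl
            intro m _
            ring
          rw [e, sum_id' j, sum_sq' j]
          ring
  -- per-term identity
  have hterm : ∀ k ∈ Finset.Icc 1 (j - 1),
      ((1 / Real.sin (k * π / j) ^ 2 : ℝ) : ℂ)
        = -4 / j * S k - 4 / (j : ℂ) ^ 2 * (S k) ^ 2 := by
    intro k hk
    obtain ⟨hk1, hk2⟩ := Finset.mem_Icc.mp hk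
    have hkj : k < j := by omega
    -- sin positive
    have hsin : 0 < Real.sin (k * π / j) := by
      apply Real.sin_pos_of_pos_of_lt_pi
      · positivity
      · rw [div_lt_iff₀ (by positivity)]
        have : (k : ℝ) < j := by exact_mod_cast hkj
        nlinarith [Real.pi_pos]
    have hs : ((Real.sin (k * π / j) : ℝ) : ℂ) ≠ 0 := by
      exact_mod_cast hsin.ne'
    have hz1 : ζ ^ k ≠ 1 := by
      intro hh
      have := (hζ.pow_eq_one_iff_dvd k).mp hh
      have := Nat.le_of_dvd (by omega) this
      omega
    have h1z : (1 : ℂ) - ζ ^ k ≠ 0 := sub_ne_zero.mpr (Ne.symm hz1)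
    have hz0 : ζ ^ k ≠ 0 := pow_ne_zero _ (Complex.exp_ne_zero _)
    -- (1 - ζ^k)^2 = -4 ζ^k sin²θ
    have hw : (1 - ζ ^ k) ^ 2 = -4 * ζ ^ k * ((Real.sin (k * π / j) : ℝ) : ℂ) ^ 2 := by
      set a : ℂ := Complex.exp ((k * π / j : ℝ) * Complex.I) with hadef
      have ha0 : a ≠ 0 := Complex.exp_ne_zero _
      have hza : ζ ^ k = a ^ 2 := by
        rw [hζdef, ← Complex.exp_nat_mul, hadef, ← Complex.exp_nat_mul]
        congr 1
        push_cast
        ring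
      have hsin' : ((Real.sin (k * π / j) : ℝ) : ℂ) = (a⁻¹ - a) * Complex.I / 2 := by
        have h2s := Complex.two_sin ((k * π / j : ℝ) : ℂ)
        rw [Complex.ofReal_sin, hadef, ← Complex.exp_neg, ← neg_mul]
        linear_combination h2s / 2
      rw [hza, hsin']
      have hI : Complex.I ^ 2 = -1 := Complex.I_sq
      field_simp
      ring_nf
      rw [Complex.I_sq]  -- maybe needed
      ring
    -- (1-ζ^k) * S k = -j
    have hkey : (1 - ζ ^ k) * S k = -(j : ℂ) := by
      have hp := poly_id j (ζ ^ k)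
      have hSk : S k = ∑ m ∈ Finset.range j, (m : ℂ) * (ζ ^ k) ^ m := by
        simp only [hSdef, pow_mul]
      have hzj : (ζ ^ k) ^ j = 1 := by
        rw [← pow_mul, mul_comm, pow_mul, hζ.pow_eq_one, one_pow]
      have hg : ∑ m ∈ Finset.range j, (ζ ^ k) ^ m = 0 := by
        rw [geom_sum_eq hz1, hzj]
        simp
      rw [hSk, hp, hg, hzj]
      ring
    -- combine
    have e1 : S k = -(j : ℂ) / (1 - ζ ^ k) := by
      rw [eq_div_iff h1z]
      linear_combination hkey
    have e2 : ((1 / Real.sin (k * π / j) ^ 2 : ℝ) : ℂ)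
        = -4 * ζ ^ k / (1 - ζ ^ k) ^ 2 := by
      rw [Complex.ofReal_div, Complex.ofReal_pow, Complex.ofReal_one]
      rw [div_eq_div_iff (pow_ne_zero 2 hs) (pow_ne_zero 2 h1z)]
      linear_combination hw
    rw [e2, e1]
    field_simp
    ring
  -- assemble
  have hIcc : Finset.Icc 1 (j - 1) = Finset.Ico 1 j := by
    rw [← Finset.Ico_add_one_right_eq_Icc]
    congr 1
    omega
  have hsplit : ∀ f : ℕ → ℂ, ∑ k ∈ Finset.range j, f k
      = f 0 + ∑ k ∈ Finset.Icc 1 (j - 1), f k := by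
    intro f
    rw [hIcc, Finset.range_eq_Ico, Finset.sum_eq_sum_Ico_succ_bot hj0]
  have hSI : ∑ k ∈ Finset.Icc 1 (j - 1), S k = -((j : ℂ) * ((j : ℂ) - 1) / 2) := by
    have := hsplit S
    rw [hsumS, hS0] at this
    linear_combination -this
  have hSI2 : ∑ k ∈ Finset.Icc 1 (j - 1), (S k) ^ 2
      = (j : ℂ) ^ 2 * ((j : ℂ) ^ 2 - 1) / 6 - ((j : ℂ) * ((j : ℂ) - 1) / 2) ^ 2 := by
    have := hsplit (fun k => (S k) ^ 2)
    rw [hsumS2, hS0] at this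
    linear_combination -this
  have main : ((∑ k ∈ Finset.Icc 1 (j - 1), 1 / Real.sin (k * π / j) ^ 2 : ℝ) : ℂ)
      = (((j : ℝ) ^ 2 - 1) / 3 : ℝ) := by
    push_cast
    rw [Finset.sum_congr rfl (fun k hk => by
      have := hterm k hk
      push_cast at this
      exact this)]
    rw [Finset.sum_sub_distrib, ← Finset.mul_sum, ← Finset.mul_sum, hSI, hSI2]
    field_simp
    ring
  exact_mod_cast main
end

section
/- For every integer j ≥ 2 and every integer k with 1 ≤ k ≤ j − 1, ∑_{p=1}^{j−1} p²·cos(2kpπ/j) = j/(2 sin²(kπ/j)) − j²/2. -/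
open Real Finset

lemma aux_sum_sq (z : ℂ) (n : ℕ) :
    (z - 1) ^ 3 * ∑ p ∈ Finset.range n, (p : ℂ) ^ 2 * z ^ p
      = z ^ n * ((z - 1) ^ 2 * n ^ 2 - 2 * z * (z - 1) * n + z * (z + 1)) - z * (z + 1) := by
  induction n with
  | zero => simp
  | succ n ih =>
    rw [Finset.sum_range_succ]
    push_cast
    linear_combination ih

theorem sum_p_sq_cos (j k : ℕ) (hj : 2 ≤ j) (hk1 : 1 ≤ k) (hk2 : k ≤ j - 1) :
    ∑ p ∈ Finset.Icc 1 (j - 1), (p : ℝ) ^ 2 * Real.cos (2 * k * p * π / j)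
      = (j : ℝ) / (2 * Real.sin (k * π / j) ^ 2) - (j : ℝ) ^ 2 / 2 := by
  have hj0 : (0:ℝ) < j := by positivity
  have hjne : (j:ℝ) ≠ 0 := ne_of_gt hj0
  have hjC : (j:ℂ) ≠ 0 := by exact_mod_cast Nat.cast_ne_zero.mpr (by omega)
  set ψ : ℝ := (k:ℝ) * π / (j:ℝ) with hψ
  have hkj : (k:ℝ) < (j:ℝ) := by exact_mod_cast (by omega : k < j)
  have hψ0 : 0 < ψ := by
    apply div_pos (mul_pos (by exact_mod_cast (by omega : 0 < k)) Real.pi_pos) hj0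
  have hψπ : ψ < π := by
    rw [hψ, div_lt_iff₀ hj0]
    calc (k:ℝ) * π < (j:ℝ) * π := by nlinarith [Real.pi_pos]
    _ = π * j := by ring
  have hs : Real.sin ψ ≠ 0 := ne_of_gt (Real.sin_pos_of_pos_of_lt_pi hψ0 hψπ)
  set s : ℝ := Real.sin ψ with hsdef
  set c : ℝ := Real.cos ψ with hcdef
  have hpyth : s ^ 2 + c ^ 2 = 1 := Real.sin_sq_add_cos_sq ψ
  set z : ℂ := Complex.exp (2 * (ψ:ℂ) * Complex.I) with hzdef
  have hz0 : z ≠ 0 := Complex.exp_ne_zero _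
  -- z^j = 1
  have hzj : z ^ j = 1 := by
    rw [hzdef, ← Complex.exp_nat_mul]
    rw [show (j:ℂ) * (2 * (ψ:ℂ) * Complex.I) = ((k:ℤ):ℂ) * (2 * (π:ℂ) * Complex.I) by
      push_cast [hψ]; field_simp]
    exact Complex.exp_int_mul_two_pi_mul_I k
  -- (z-1)^2 = -4 s^2 z
  have hw : z = ((c:ℂ) + (s:ℂ) * Complex.I) ^ 2 := by
    rw [hzdef, show (2 * (ψ:ℂ) * Complex.I) = ((ψ:ℂ) * Complex.I) + ((ψ:ℂ) * Complex.I) by ring,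
      Complex.exp_add, Complex.exp_mul_I, hsdef, hcdef]
    push_cast [Complex.ofReal_cos, Complex.ofReal_sin]
    ring
  have h1 : (z - 1) ^ 2 = -4 * (s:ℂ) ^ 2 * z := by
    rw [hw]
    have hp : (s:ℂ) ^ 2 + (c:ℂ) ^ 2 = 1 := by exact_mod_cast hpyth
    linear_combination ((s:ℂ)^4*Complex.I^2 + 4*(c:ℂ)*(s:ℂ)^3*Complex.I + 6*(c:ℂ)^2*(s:ℂ)^2 - 2*(s:ℂ)^2 + 3*(s:ℂ)^4) * Complex.I_sq + (4*(c:ℂ)*(s:ℂ)*Complex.I + (c:ℂ)^2 - 3*(s:ℂ)^2 - 1) * hp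
  have hz1 : z ≠ 1 := by
    intro h
    rw [h] at h1
    simp at h1
    exact hs (by exact_mod_cast h1)
  -- from the generic sum
  set S : ℂ := ∑ p ∈ Finset.range j, (p : ℂ) ^ 2 * z ^ p with hSdef
  have h2 : (z - 1) ^ 2 * S = (j:ℂ) ^ 2 * (z - 1) - 2 * z * (j:ℂ) := by
    have h3 := aux_sum_sq z j
    rw [hzj] at h3
    have hne : z - 1 ≠ 0 := sub_ne_zero.mpr hz1
    apply mul_left_cancel₀ hne
    linear_combination h3
  -- multiply by z⁻¹
  have hzinv : Complex.exp ((-(2*ψ):ℝ) * Complex.I) * z = 1 := by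
    rw [hzdef, ← Complex.exp_add]
    push_cast
    rw [show (-(2 * (ψ:ℂ)) * Complex.I + 2 * (ψ:ℂ) * Complex.I) = 0 by ring, Complex.exp_zero]
  have h4 : (-4 * (s:ℂ)^2) * S = (j:ℂ)^2 * (1 - Complex.exp ((-(2*ψ):ℝ) * Complex.I)) - 2 * (j:ℂ) := by
    have := congrArg (fun w => Complex.exp ((-(2*ψ):ℝ) * Complex.I) * w) h2
    rw [h1] at this
    calc (-4 * (s:ℂ)^2) * S = Complex.exp ((-(2*ψ):ℝ) * Complex.I) * (-4 * (s:ℂ)^2 * z * S) := by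
          rw [show Complex.exp ((-(2*ψ):ℝ) * Complex.I) * (-4 * (s:ℂ)^2 * z * S)
              = (Complex.exp ((-(2*ψ):ℝ) * Complex.I) * z) * (-4 * (s:ℂ)^2 * S) by ring, hzinv]
          ring
      _ = Complex.exp ((-(2*ψ):ℝ) * Complex.I) * ((j:ℂ) ^ 2 * (z - 1) - 2 * z * (j:ℂ)) := this
      _ = (j:ℂ)^2 * ((Complex.exp ((-(2*ψ):ℝ) * Complex.I) * z) - Complex.exp ((-(2*ψ):ℝ) * Complex.I)) - 2 * (Complex.exp ((-(2*ψ):ℝ) * Complex.I) * z) * (j:ℂ) := by ring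
      _ = _ := by rw [hzinv]; ring
  -- take real parts
  have hSre : S.re = ∑ p ∈ Finset.range j, (p:ℝ)^2 * Real.cos (2 * ψ * p) := by
    rw [hSdef, Complex.re_sum]
    refine Finset.sum_congr rfl fun p _ => ?_
    have hzp : z ^ p = Complex.exp (((2 * ψ * p : ℝ)) * Complex.I) := by
      rw [hzdef, ← Complex.exp_nat_mul]
      push_cast
      ring_nf
    rw [hzp, show ((p:ℂ)^2) = (((p:ℝ)^2 : ℝ) : ℂ) by push_cast; ring,
      Complex.re_ofReal_mul, Complex.exp_ofReal_mul_I_re]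
  have hc2 : Real.cos (2*ψ) = 1 - 2 * s ^ 2 := by
    rw [Real.cos_two_mul']; linarith
  have hre2 : -4 * s^2 * S.re = (j:ℝ)^2 * (2 * s^2) - 2 * (j:ℝ) := by
    have h5 : (((-4 * s^2 : ℝ)) : ℂ) * S
        = (((j:ℝ)^2 : ℝ) : ℂ) * (1 - Complex.exp ((-(2*ψ):ℝ) * Complex.I)) - (((2*(j:ℝ)) : ℝ) : ℂ) := by
      push_cast
      push_cast at h4
      linear_combination h4
    have h6 := congrArg Complex.re h5
    rw [Complex.re_ofReal_mul, Complex.sub_re, Complex.re_ofReal_mul, Complex.sub_re,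
      Complex.one_re, Complex.exp_ofReal_mul_I_re, Complex.ofReal_re, Real.cos_neg, hc2] at h6
    linarith [h6]
  -- relate target sum with S.re
  have hsum : ∑ p ∈ Finset.Icc 1 (j - 1), (p : ℝ) ^ 2 * Real.cos (2 * k * p * π / j) = S.re := by
    rw [hSre, Finset.range_eq_Ico, Finset.sum_eq_sum_Ico_succ_bot (by omega : 0 < j)]
    rw [show Finset.Icc 1 (j-1) = Finset.Ico 1 j by
      rw [← Finset.Ico_add_one_right_eq_Icc]; congr 1; omega]
    simp only [Nat.cast_zero]
    rw [show ((0:ℝ))^2 * Real.cos (2 * ψ * 0) = 0 by ring, zero_add]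
    refine Finset.sum_congr rfl fun p _ => ?_
    congr 1
    rw [hψ]
    field_simp
  rw [hsum]
  have hs2 : (0:ℝ) < s ^ 2 := by positivity
  rw [eq_sub_iff_add_eq, eq_div_iff (by positivity : (2 * s ^ 2 : ℝ) ≠ 0)]
  linear_combination (-(1:ℝ)/2) * hre2
end

section
/- For every integer j ≥ 2 and every integer k with 1 ≤ k ≤ j − 1, ∑_{p=1}^{j−1} p(j − p)·cos(2kpπ/j) = −j/(2 sin²(kπ/j)). -/
open Real Finset

lemma sum_pz_aux (n : ℕ) (z : ℂ) :
    (1-z)^2 * ∑ p ∈ Finset.range n, (p:ℂ) * z^p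
      = z - n*z^n + ((n:ℂ)-1)*z^(n+1) := by
  induction n with
  | zero => simp
  | succ n ih =>
    rw [Finset.sum_range_succ, mul_add, ih]
    push_cast; ring

lemma sum_p2z_aux (n : ℕ) (z : ℂ) :
    (1-z)^3 * ∑ p ∈ Finset.range n, (p:ℂ)^2 * z^p
      = z + z^2 - (n:ℂ)^2*z^n + (2*(n:ℂ)^2-2*n-1)*z^(n+1) - ((n:ℂ)-1)^2*z^(n+2) := by
  induction n with
  | zero => simp
  | succ n ih =>
    rw [Finset.sum_range_succ, mul_add, ih]
    push_cast; ring

lemma key_aux (n : ℕ) (z : ℂ) (hz : z^n = 1) (h1 : z ≠ 1) :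
    (1-z)^2 * ∑ p ∈ Finset.range n, (p:ℂ) * ((n:ℂ) - p) * z^p = 2*n*z := by
  have hne : (1:ℂ) - z ≠ 0 := sub_ne_zero.mpr (Ne.symm h1)
  apply mul_left_cancel₀ hne
  have expand : ∑ p ∈ Finset.range n, (p:ℂ) * ((n:ℂ) - p) * z^p
      = (n:ℂ) * ∑ p ∈ Finset.range n, (p:ℂ) * z^p
        - ∑ p ∈ Finset.range n, (p:ℂ)^2 * z^p := by
    rw [Finset.mul_sum, ← Finset.sum_sub_distrib]
    apply Finset.sum_congr rfl
    intro p _; ring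
  have h1' := sum_pz_aux n z
  have h2' := sum_p2z_aux n z
  have hz1 : z^(n+1) = z := by rw [pow_succ, hz, one_mul]
  have hz2 : z^(n+2) = z^2 := by rw [pow_add, hz, one_mul]
  calc (1-z) * ((1-z)^2 * ∑ p ∈ Finset.range n, (p:ℂ) * ((n:ℂ) - p) * z^p)
      = (n:ℂ) * ((1-z)*((1-z)^2 * ∑ p ∈ Finset.range n, (p:ℂ) * z^p))
        - (1-z)^3 * ∑ p ∈ Finset.range n, (p:ℂ)^2 * z^p := by
        rw [expand]; ring
    _ = (n:ℂ) * ((1-z)*(z - n*z^n + ((n:ℂ)-1)*z^(n+1)))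
        - (z + z^2 - (n:ℂ)^2*z^n + (2*(n:ℂ)^2-2*n-1)*z^(n+1) - ((n:ℂ)-1)^2*z^(n+2)) := by
        rw [h1', h2']
    _ = (1-z) * (2*n*z) := by rw [hz, hz1, hz2]; ring

theorem sum_p_jp_cos (j k : ℕ) (hj : 2 ≤ j) (hk1 : 1 ≤ k) (hk2 : k ≤ j - 1) :
    ∑ p ∈ Finset.Icc 1 (j - 1), (p : ℝ) * ((j : ℝ) - p) * Real.cos (2 * k * p * π / j)
      = -(j : ℝ) / (2 * Real.sin (k * π / j) ^ 2) := by
  have hjC : (j:ℂ) ≠ 0 := Nat.cast_ne_zero.mpr (by omega)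
  have hj0 : (j:ℝ) ≠ 0 := by positivity
  set θ : ℝ := 2 * k * π / j with hθ
  set z : ℂ := Complex.exp (θ * Complex.I) with hzdef
  have hz0 : z ≠ 0 := Complex.exp_ne_zero _
  have hzj : z ^ j = 1 := by
    rw [hzdef, ← Complex.exp_nat_mul]
    have : (j:ℂ) * (θ * Complex.I) = (k:ℤ) * (2 * π * Complex.I) := by
      rw [hθ]; push_cast; field_simp
    rw [this, Complex.exp_int_mul_two_pi_mul_I]
  have hz1 : z ≠ 1 := by
    rw [hzdef]
    intro h
    rw [Complex.exp_eq_one_iff] at h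
    obtain ⟨m, hm⟩ := h
    have hm' : (θ:ℂ) = (m:ℂ) * (2*π) := by
      have : (θ:ℂ) * Complex.I = ((m:ℂ) * (2*π)) * Complex.I := by
        rw [hm]; ring
      exact mul_right_cancel₀ Complex.I_ne_zero this
    have hmr : θ = (m:ℝ) * (2*π) := by exact_mod_cast hm'
    rw [hθ] at hmr
    have hkm : (k:ℝ) = (m:ℝ) * j := by
      field_simp at hmr
      nlinarith [Real.pi_pos, hmr]
    have hkmz : (k:ℤ) = m * j := by exact_mod_cast hkm
    have h1 : (1:ℤ) ≤ k := by exact_mod_cast hk1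
    have h2 : (k:ℤ) ≤ (j:ℤ) - 1 := by
      have : k ≤ j - 1 := hk2
      omega
    have hjz : (2:ℤ) ≤ j := by exact_mod_cast hj
    rcases le_or_gt m 0 with hm0 | hm0
    · nlinarith
    · have : (1:ℤ) ≤ m := hm0
      nlinarith
  -- sin positivity
  have hsin_pos : 0 < Real.sin (k * π / j) := by
    apply Real.sin_pos_of_pos_of_lt_pi
    · have : (0:ℝ) < k := by exact_mod_cast hk1
      have : (0:ℝ) < j := by positivity
      positivity
    · rw [div_lt_iff₀ (by positivity : (0:ℝ) < j)]
      have hkj : (k:ℝ) < j := by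
        have : k < j := by omega
        exact_mod_cast this
      nlinarith [Real.pi_pos]
  have hs0 : Real.sin (k * π / j) ≠ 0 := ne_of_gt hsin_pos
  set sC : ℂ := ((Real.sin (k * π / j) : ℝ) : ℂ) with hsCdef
  have hsC0 : sC ≠ 0 := Complex.ofReal_ne_zero.mpr hs0
  -- (1-z)^2 = -4 sC^2 z
  set w : ℂ := Complex.exp ((k * π / j : ℝ) * Complex.I) with hwdef
  have hw2 : w^2 = z := by
    rw [hwdef, hzdef, ← Complex.exp_nat_mul]
    congr 1
    push_cast
    rw [hθ]
    push_cast
    ring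
  have hwinv : w * Complex.exp (-((k * π / j : ℝ)) * Complex.I) = 1 := by
    rw [hwdef, ← Complex.exp_add]
    rw [← Complex.exp_zero]
    congr 1
    ring
  have hsC : sC = (Complex.exp (-((k * π / j : ℝ)) * Complex.I) - w) * Complex.I / 2 := by
    rw [hsCdef, hwdef, Complex.ofReal_sin, Complex.sin]
  have hfac : (1 - z)^2 = -4 * sC^2 * z := by
    set winv := Complex.exp (-((k * π / j : ℝ)) * Complex.I)
    have h1z : (1:ℂ) - z = (winv - w) * w := by
      rw [← hw2, ← hwinv]; ring
    rw [h1z, hsC, ← hw2]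
    have hI : Complex.I^2 = -1 := Complex.I_sq
    linear_combination (w^2 * (winv - w)^2) * hI
  -- complex sum value
  set S : ℂ := ∑ p ∈ Finset.range j, (p:ℂ) * ((j:ℂ) - p) * z^p with hSdef
  have hkey : (1-z)^2 * S = 2*j*z := key_aux j z hzj hz1
  rw [hfac] at hkey
  have hS2 : (-4*sC^2) * S = 2*(j:ℂ) := by
    apply mul_right_cancel₀ hz0
    linear_combination hkey
  have hSval : S = -(j:ℂ) / (2*sC^2) := by
    rw [eq_div_iff (by simp [hsC0] : (2:ℂ)*sC^2 ≠ 0)]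
    linear_combination (-1/2 : ℂ) * hS2
  -- relate real sum to Re S
  have hterm : ∀ p : ℕ, ((p:ℂ) * ((j:ℂ) - p) * z^p).re
      = (p:ℝ) * ((j:ℝ) - p) * Real.cos (2 * k * p * π / j) := by
    intro p
    have hzp : z^p = Complex.exp ((2 * k * p * π / j : ℝ) * Complex.I) := by
      rw [hzdef, ← Complex.exp_nat_mul]
      congr 1
      rw [hθ]
      push_cast
      field_simp
    have hcoef : (p:ℂ) * ((j:ℂ) - p) = (((p:ℝ) * ((j:ℝ) - p) : ℝ) : ℂ) := by
      push_cast; ring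
    rw [hzp, hcoef, Complex.re_ofReal_mul, Complex.exp_ofReal_mul_I_re]
  have hsum : ∑ p ∈ Finset.Icc 1 (j - 1), (p : ℝ) * ((j : ℝ) - p) * Real.cos (2 * k * p * π / j)
      = S.re := by
    rw [hSdef, Complex.re_sum]
    rw [← Finset.sum_subset (by
      intro p hp
      simp only [Finset.mem_Icc, Finset.mem_range] at hp ⊢
      omega : Finset.Icc 1 (j-1) ⊆ Finset.range j)]
    · exact Finset.sum_congr rfl (fun p _ => (hterm p).symm)
    · intro p hp hnp
      simp only [Finset.mem_Icc, Finset.mem_range] at hp hnp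
      have : p = 0 := by omega
      subst this
      simp
  rw [hsum, hSval]
  rw [hsCdef]
  have : -(j:ℂ) / (2 * ((Real.sin (k*π/j) : ℝ):ℂ)^2)
      = ((-(j:ℝ) / (2 * Real.sin (k*π/j)^2) : ℝ) : ℂ) := by
    push_cast
    ring
  rw [this, Complex.ofReal_re]
end

section
/- For every integer n ≥ 2 and every real x with sin(x/2) ≠ 0, ∑_{k=1}^{n−1} k·cos(kx) = (n·sin(((2n−1)/2)x))/(2 sin(x/2)) − (1 − cos(nx))/(4 sin²(x/2)). -/
open Real Finset

lemma gr_1352_key (x : ℝ) (hx : Real.sin (x / 2) ≠ 0) (N : ℝ) :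
    (N + 1) * Real.sin ((2 * (N + 1) - 1) / 2 * x) / (2 * Real.sin (x / 2))
      - (1 - Real.cos ((N + 1) * x)) / (4 * Real.sin (x / 2) ^ 2)
    = N * Real.sin ((2 * N - 1) / 2 * x) / (2 * Real.sin (x / 2))
      - (1 - Real.cos (N * x)) / (4 * Real.sin (x / 2) ^ 2) + N * Real.cos (N * x) := by
  have e1 : (2 * (N + 1) - 1) / 2 * x = N * x + x / 2 := by ring
  have e2 : (2 * N - 1) / 2 * x = N * x - x / 2 := by ring
  have e3 : (N + 1) * x = (N * x + x / 2) + x / 2 := by ring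
  rw [e1, e2, e3, Real.cos_add (N * x + x / 2), Real.sin_add, Real.cos_add, Real.sin_sub]
  have h := Real.sin_sq_add_cos_sq (x / 2)
  field_simp
  linear_combination (2 * Real.cos (N*x)) * h

lemma gr_1352_aux (x : ℝ) (hx : Real.sin (x / 2) ≠ 0) (m : ℕ) :
    ∑ k ∈ Finset.Icc 1 (m + 1), (k : ℝ) * Real.cos (k * x)
      = ((m : ℝ) + 2) * Real.sin ((2 * ((m : ℝ) + 2) - 1) / 2 * x) / (2 * Real.sin (x / 2))
        - (1 - Real.cos (((m : ℝ) + 2) * x)) / (4 * Real.sin (x / 2) ^ 2) := by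
  induction m with
  | zero =>
      simp only [Nat.cast_zero, zero_add]
      rw [show Finset.Icc 1 1 = {1} from rfl]
      simp only [Finset.sum_singleton, Nat.cast_one, one_mul]
      have := gr_1352_key x hx 1
      norm_num at this ⊢
      rw [show (1:ℝ)/2 * x = x/2 by ring] at this
      rw [this]
      have h2 : Real.cos x = 1 - 2 * Real.sin (x/2)^2 := by
        have h3 : Real.cos (2 * (x/2)) = 2 * Real.cos (x/2)^2 - 1 := Real.cos_two_mul _
        rw [show 2 * (x/2) = x by ring] at h3
        nlinarith [Real.sin_sq_add_cos_sq (x/2)]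
      rw [h2]
      field_simp
      ring
  | succ k ih =>
      rw [Finset.sum_Icc_succ_top (by omega : 1 ≤ k + 1 + 1), ih]
      push_cast
      have := gr_1352_key x hx ((k : ℝ) + 2)
      rw [show (k:ℝ) + 2 + 1 = (k:ℝ) + 1 + 2 by ring] at this
      rw [show (k:ℝ) + 1 + 1 = (k:ℝ) + 2 by ring]
      linarith [this]

theorem gr_1352 (n : ℕ) (hn : 2 ≤ n) (x : ℝ) (hx : Real.sin (x / 2) ≠ 0) :
    ∑ k ∈ Finset.Icc 1 (n - 1), (k : ℝ) * Real.cos (k * x)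
      = (n : ℝ) * Real.sin ((2 * (n : ℝ) - 1) / 2 * x) / (2 * Real.sin (x / 2))
        - (1 - Real.cos (n * x)) / (4 * Real.sin (x / 2) ^ 2) := by
  obtain ⟨m, rfl⟩ : ∃ m, n = m + 2 := ⟨n - 2, by omega⟩
  have := gr_1352_aux x hx m
  rw [show m + 2 - 1 = m + 1 from rfl]
  push_cast
  linarith [this]
end

section
/- For every integer j ≥ 2, (1/(πj)) ∑_{p=1}^{j−1} p(j−p) ∑_{k=1}^{⌊(j−1)/2⌋} cos(2kpπ/j)·log(sin(kπ/j)) = −(1/(2π)) ∑_{k=1}^{⌊(j−1)/2⌋} log(sin(kπ/j))/sin²(kπ/j). -/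
open Real Finset

-- Lemma 1: geometric-derivative identity
lemma lem1 (n : ℕ) (z : ℂ) :
    (z - 1) ^ 2 * ∑ p ∈ Finset.range n, (p : ℂ) * z ^ p
      = ((n : ℂ) - 1) * z ^ (n + 1) - (n : ℂ) * z ^ n + z := by
  induction n with
  | zero => rw [Finset.range_zero, Finset.sum_empty]; push_cast; ring
  | succ n ih =>
    rw [Finset.sum_range_succ, mul_add, ih]
    push_cast
    ring

-- Lemma 2
lemma lem2 (n : ℕ) (z : ℂ) :
    (z - 1) ^ 3 * ∑ p ∈ Finset.range n, (p : ℂ) * ((n : ℂ) - p) * z ^ p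
      = ((n : ℂ) - 1) * z ^ (n + 2) - ((n : ℂ) + 1) * z ^ (n + 1)
        + ((n : ℂ) + 1) * z ^ 2 - ((n : ℂ) - 1) * z := by
  induction n with
  | zero => rw [Finset.range_zero, Finset.sum_empty]; push_cast; ring
  | succ n ih =>
    have hsplit : ∑ p ∈ Finset.range (n + 1), (p : ℂ) * (((n : ℕ) + 1 : ℂ) - p) * z ^ p
        = (∑ p ∈ Finset.range n, (p : ℂ) * ((n : ℂ) - p) * z ^ p)
          + ∑ p ∈ Finset.range (n + 1), (p : ℂ) * z ^ p := by
      have h1 : ∀ p ∈ Finset.range (n + 1),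
          (p : ℂ) * (((n : ℕ) + 1 : ℂ) - p) * z ^ p
            = (p : ℂ) * ((n : ℂ) - p) * z ^ p + (p : ℂ) * z ^ p := by
        intro p _; ring
      rw [Finset.sum_congr rfl h1, Finset.sum_add_distrib, Finset.sum_range_succ
        (f := fun p => (p : ℂ) * ((n : ℂ) - p) * z ^ p)]
      simp
    push_cast
    rw [hsplit, mul_add]
    have h2 := lem1 (n + 1) z
    push_cast at h2
    rw [show (z - 1) ^ 3 * ∑ p ∈ Finset.range (n + 1), (p : ℂ) * z ^ p
        = (z - 1) * ((z - 1) ^ 2 * ∑ p ∈ Finset.range (n + 1), (p : ℂ) * z ^ p) by ring, h2, ih]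
    ring

lemma key (j k : ℕ) (hj : 2 ≤ j) (hk1 : 1 ≤ k) (hk2 : k < j) :
    ∑ p ∈ Finset.range j, (p : ℂ) * ((j : ℂ) - p)
        * Complex.exp ((2 * π * k / j : ℝ) * Complex.I) ^ p
      = ((-(j : ℝ) / (2 * Real.sin (k * π / j) ^ 2) : ℝ) : ℂ) := by
  have hjR : (0 : ℝ) < j := by positivity
  have hjne : (j : ℝ) ≠ 0 := ne_of_gt hjR
  have hjC : (j : ℂ) ≠ 0 := Nat.cast_ne_zero.2 (by omega)
  set θ : ℝ := 2 * π * k / j with hθ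
  set z : ℂ := Complex.exp ((θ : ℝ) * Complex.I) with hzdef
  -- sin positivity
  have hσpos : 0 < Real.sin (k * π / j) := by
    apply Real.sin_pos_of_pos_of_lt_pi
    · positivity
    · rw [div_lt_iff₀ hjR]
      have : (k : ℝ) < j := by exact_mod_cast hk2
      nlinarith [Real.pi_pos]
  set σ : ℝ := Real.sin (k * π / j) with hσdef
  have hσne : (σ : ℂ) ≠ 0 := Complex.ofReal_ne_zero.2 (ne_of_gt hσpos)
  have hz0 : z ≠ 0 := Complex.exp_ne_zero _
  -- z^j = 1
  have hzj : z ^ j = 1 := by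
    rw [hzdef, ← Complex.exp_nat_mul]
    rw [show (j : ℂ) * ((θ : ℝ) * Complex.I) = (k : ℤ) * (2 * (π : ℂ) * Complex.I) by
      push_cast [hθ]; field_simp]
    exact Complex.exp_int_mul_two_pi_mul_I k
  -- z ≠ 1
  have hzne : z ≠ 1 := by
    rw [hzdef]
    intro h
    rw [Complex.exp_eq_one_iff] at h
    obtain ⟨m, hm⟩ := h
    have hI : (Complex.I : ℂ) ≠ 0 := Complex.I_ne_zero
    have hθm : (θ : ℂ) = m * (2 * π) := by
      have := mul_right_cancel₀ hI (by rw [hm]; ring : (θ : ℂ) * Complex.I = (m * (2 * π)) * Complex.I)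
      exact this
    have hθm' : θ = m * (2 * π) := by exact_mod_cast hθm
    have hπ : (0:ℝ) < π := Real.pi_pos
    have hk' : (k : ℝ) = m * j := by
      rw [hθ] at hθm'
      field_simp at hθm'
      nlinarith [hθm']
    have hkpos : (0:ℝ) < k := by exact_mod_cast hk1
    have hkj : (k : ℝ) < j := by exact_mod_cast hk2
    rcases le_or_gt m 0 with hm0 | hm0
    · have : (m : ℝ) * j ≤ 0 := mul_nonpos_of_nonpos_of_nonneg (by exact_mod_cast hm0) (le_of_lt hjR)
      linarith [hk' ▸ hkpos]
    · have hm1 : (1:ℤ) ≤ m := hm0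
      have : (j : ℝ) ≤ m * j := by
        have : (1:ℝ) ≤ m := by exact_mod_cast hm1
        nlinarith
      linarith [hk' ▸ hkj]
  -- (z-1)^2 = -4 σ^2 z
  have hsq : (z - 1) ^ 2 = -4 * (σ : ℂ) ^ 2 * z := by
    have hc : Real.cos θ = 1 - 2 * σ ^ 2 := by
      rw [show θ = 2 * (k * π / j) by rw [hθ]; ring, Real.cos_two_mul', hσdef]
      linear_combination Real.sin_sq_add_cos_sq (k * π / j)
    have hs : Real.sin θ = 2 * σ * Real.cos (k * π / j) := by
      rw [show θ = 2 * (k * π / j) by rw [hθ]; ring, Real.sin_two_mul, hσdef]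
    have hγR : Real.cos (k * π / j) ^ 2 = 1 - σ ^ 2 := by
      rw [hσdef]; nlinarith [Real.sin_sq_add_cos_sq (k * π / j)]
    have hγ : ((Real.cos (k * π / j) : ℂ)) ^ 2 = 1 - (σ : ℂ) ^ 2 := by
      exact_mod_cast congrArg (fun x : ℝ => (x : ℂ)) hγR
    rw [hzdef, Complex.exp_mul_I, ← Complex.ofReal_cos, ← Complex.ofReal_sin, hc, hs]
    simp only [Complex.ofReal_sub, Complex.ofReal_mul, Complex.ofReal_one,
      Complex.ofReal_ofNat, Complex.ofReal_pow]
    set γ : ℂ := (Real.cos (k * π / j) : ℂ)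
    linear_combination (4 * (σ:ℂ)^2 * γ^2) * Complex.I_sq - 4 * (σ:ℂ)^2 * hγ
  -- the sum
  set S : ℂ := ∑ p ∈ Finset.range j, (p : ℂ) * ((j : ℂ) - p) * z ^ p with hSdef
  have hS3 : (z - 1) ^ 3 * S = 2 * j * z * (z - 1) := by
    have h := lem2 j z
    rw [show j + 2 = j + 2 from rfl] at h
    rw [pow_add, pow_add, hzj, one_mul, one_mul] at h
    rw [hSdef, h]
    ring
  have hS2 : (z - 1) ^ 2 * S = 2 * j * z := by
    have hne : z - 1 ≠ 0 := sub_ne_zero.2 hzne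
    apply mul_left_cancel₀ hne
    linear_combination hS3
  have h4 : z * (-4 * (σ : ℂ) ^ 2 * S) = z * (2 * j) := by
    rw [hsq] at hS2
    linear_combination hS2
  have h5 : -4 * (σ : ℂ) ^ 2 * S = 2 * j := mul_left_cancel₀ hz0 h4
  rw [hSdef] at h5 ⊢
  push_cast
  field_simp
  linear_combination (-(1:ℂ)/2) * h5

lemma realkey (j k : ℕ) (hj : 2 ≤ j) (hk1 : 1 ≤ k) (hk2 : k < j) :
    ∑ p ∈ Finset.Icc 1 (j - 1), (p : ℝ) * ((j : ℝ) - p) * Real.cos (2 * k * p * π / j)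
      = -(j : ℝ) / (2 * Real.sin (k * π / j) ^ 2) := by
  have hjR : (0 : ℝ) < j := by positivity
  -- extend sum to range j
  have hext : ∑ p ∈ Finset.Icc 1 (j - 1), (p : ℝ) * ((j : ℝ) - p) * Real.cos (2 * k * p * π / j)
      = ∑ p ∈ Finset.range j, (p : ℝ) * ((j : ℝ) - p) * Real.cos (2 * k * p * π / j) := by
    apply Finset.sum_subset
    · intro x hx
      simp only [Finset.mem_Icc] at hx
      simp only [Finset.mem_range]
      omega
    · intro x hx hxn
      simp only [Finset.mem_range] at hx
      simp only [Finset.mem_Icc] at hxn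
      have : x = 0 := by omega
      simp [this]
  rw [hext]
  have hkey := congrArg Complex.re (key j k hj hk1 hk2)
  rw [Complex.re_sum] at hkey
  rw [Complex.ofReal_re] at hkey
  rw [← hkey]
  apply Finset.sum_congr rfl
  intro p _
  have hzp : Complex.exp ((2 * π * k / j : ℝ) * Complex.I) ^ p
      = Complex.exp (((2 * k * p * π / j : ℝ) : ℂ) * Complex.I) := by
    rw [← Complex.exp_nat_mul]
    congr 1
    push_cast
    ring
  rw [hzp]
  rw [show (p : ℂ) * ((j : ℂ) - p) = (((p : ℝ) * ((j : ℝ) - p) : ℝ) : ℂ) by push_cast; ring]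
  rw [Complex.re_ofReal_mul, Complex.exp_ofReal_mul_I_re]

theorem double_sum_log_sin (j : ℕ) (hj : 2 ≤ j) :
    (1 / (π * j)) * ∑ p ∈ Finset.Icc 1 (j - 1), (p : ℝ) * ((j : ℝ) - p) *
        ∑ k ∈ Finset.Icc 1 ((j - 1) / 2), Real.cos (2 * k * p * π / j) * Real.log (Real.sin (k * π / j))
      = -(1 / (2 * π)) * ∑ k ∈ Finset.Icc 1 ((j - 1) / 2),
          Real.log (Real.sin (k * π / j)) / Real.sin (k * π / j) ^ 2 := by
  have hπ : π ≠ 0 := Real.pi_ne_zero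
  have hjR : (0:ℝ) < j := by positivity
  have hjne : (j:ℝ) ≠ 0 := ne_of_gt hjR
  simp only [Finset.mul_sum]
  rw [Finset.sum_comm]
  have h2 : ∀ k ∈ Finset.Icc 1 ((j-1)/2),
      ∑ p ∈ Finset.Icc 1 (j - 1), (p : ℝ) * ((j : ℝ) - p) *
        (Real.cos (2 * k * p * π / j) * Real.log (Real.sin (k * π / j)))
      = (-(j : ℝ) / (2 * Real.sin (k * π / j) ^ 2)) * Real.log (Real.sin (k * π / j)) := by
    intro k hk
    simp only [Finset.mem_Icc] at hk
    have hk1 : 1 ≤ k := hk.1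
    have hk2 : k < j := by omega
    calc ∑ p ∈ Finset.Icc 1 (j - 1), (p : ℝ) * ((j : ℝ) - p) *
        (Real.cos (2 * k * p * π / j) * Real.log (Real.sin (k * π / j)))
        = ∑ p ∈ Finset.Icc 1 (j - 1), ((p : ℝ) * ((j : ℝ) - p) *
            Real.cos (2 * k * p * π / j)) * Real.log (Real.sin (k * π / j)) := by
          exact Finset.sum_congr rfl (fun p _ => by ring)
      _ = (∑ p ∈ Finset.Icc 1 (j - 1), (p : ℝ) * ((j : ℝ) - p) *
            Real.cos (2 * k * p * π / j)) * Real.log (Real.sin (k * π / j)) := by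
          rw [Finset.sum_mul]
      _ = (-(j : ℝ) / (2 * Real.sin (k * π / j) ^ 2)) * Real.log (Real.sin (k * π / j)) := by
          rw [realkey j k hj hk1 hk2]
  apply Finset.sum_congr rfl
  intro k hk
  rw [← Finset.mul_sum, h2 k hk]
  simp only [Finset.mem_Icc] at hk
  have hσpos : 0 < Real.sin (k * π / j) := by
    apply Real.sin_pos_of_pos_of_lt_pi
    · have : 0 < k := hk.1
      positivity
    · rw [div_lt_iff₀ hjR]
      have : (k : ℝ) < j := by exact_mod_cast (by omega : k < j)
      nlinarith [Real.pi_pos]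
  have hσne : Real.sin (k * π / j) ≠ 0 := ne_of_gt hσpos
  field_simp
end

section
/- For a, b > 0 real, the double series ∑_{n=1}^{∞} ∑_{ℓ=1}^{∞} (aℓ + n)^{−z} converges for real z > 2 and equals (1/Γ(z)) ∫₀^∞ t^{z−1} · 1/((e^{at} − 1)(e^{t} − 1)) dt, where a = π/α. -/
set_option maxHeartbeats 1000000

open Real

private lemma geom_aux {s : ℝ} (hs : 0 < s) :
    HasSum (fun n : ℕ => Real.exp (-s) ^ (n + 1)) (1 / (Real.exp s - 1)) := by
  have hE : 1 < Real.exp s := by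
    rw [← Real.exp_zero]; exact Real.exp_lt_exp.mpr hs
  have hr1 : Real.exp (-s) < 1 := by
    rw [← Real.exp_zero]; exact Real.exp_lt_exp.mpr (by linarith)
  have hr0 : (0 : ℝ) ≤ Real.exp (-s) := (Real.exp_pos _).le
  have h := (hasSum_geometric_of_lt_one hr0 hr1).mul_left (Real.exp (-s))
  have hval : Real.exp (-s) * (1 - Real.exp (-s))⁻¹ = 1 / (Real.exp s - 1) := by
    rw [Real.exp_neg]
    have hE0 : Real.exp s ≠ 0 := (Real.exp_pos _).ne'
    have h1 : Real.exp s - 1 ≠ 0 := ne_of_gt (by linarith)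
    have h2 : 1 - (Real.exp s)⁻¹ ≠ 0 := by
      have : (Real.exp s)⁻¹ < 1 := by
        rw [inv_lt_one_iff₀]; right; exact hE
      linarith
    field_simp
  rw [hval] at h
  simpa [pow_succ'] using h

private lemma integrable_aux {z r : ℝ} (hz : 0 < z) (hr : 0 < r) :
    MeasureTheory.IntegrableOn (fun t : ℝ => t ^ (z - 1) * Real.exp (-(r * t)))
      (Set.Ioi (0 : ℝ)) := by
  have h := Real.GammaIntegral_convergent hz
  rw [show (0 : ℝ) = r * 0 by ring, ← MeasureTheory.integrableOn_Ioi_comp_mul_left_iff _ _ hr]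
    at h
  refine MeasureTheory.IntegrableOn.congr_fun (h.const_mul (r ^ (1 - z)))
    (fun t ht => ?_) measurableSet_Ioi
  have ht0 : (0 : ℝ) < t := ht
  have h1 : r ^ (1 - z) * r ^ (z - 1) = 1 := by
    rw [← Real.rpow_add hr]; norm_num
  rw [Real.mul_rpow hr.le ht0.le]
  linear_combination (Real.exp (-(r * t)) * t ^ (z - 1)) * h1

theorem barnes_zeta_integral_rep (α : ℝ) (hα : 0 < α) (z : ℝ) (hz : 2 < z) :
    Summable (fun q : ℕ × ℕ =>
      ((π / α) * ((q.1 : ℝ) + 1) + ((q.2 : ℝ) + 1)) ^ (-z)) ∧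
    ∑' q : ℕ × ℕ, ((π / α) * ((q.1 : ℝ) + 1) + ((q.2 : ℝ) + 1)) ^ (-z)
      = (1 / Real.Gamma z) *
        ∫ t in Set.Ioi (0 : ℝ),
          t ^ (z - 1) / ((Real.exp ((π / α) * t) - 1) * (Real.exp t - 1)) := by
  set a : ℝ := π / α with ha_def
  have ha : 0 < a := div_pos Real.pi_pos hα
  have hz0 : 0 < z := by linarith
  set c : ℕ × ℕ → ℝ := fun q => a * ((q.1 : ℝ) + 1) + ((q.2 : ℝ) + 1) with hc_def
  have hc : ∀ q, 0 < c q := fun q => by positivity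
  -- summability
  have hg : Summable (fun n : ℕ => ((n : ℝ) + 1) ^ (-(z / 2))) := by
    have h1 : Summable (fun n : ℕ => ((n : ℝ)) ^ (-(z / 2))) :=
      Real.summable_nat_rpow.mpr (by linarith)
    have h2 := (summable_nat_add_iff 1).mpr h1
    simpa using h2
  have hgnn : ∀ n : ℕ, (0 : ℝ) ≤ ((n : ℝ) + 1) ^ (-(z / 2)) :=
    fun n => Real.rpow_nonneg (by positivity) _
  have hprod : Summable (fun q : ℕ × ℕ =>
      ((q.1 : ℝ) + 1) ^ (-(z / 2)) * ((q.2 : ℝ) + 1) ^ (-(z / 2))) :=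
    hg.mul_of_nonneg hg hgnn hgnn
  have hbound : ∀ q : ℕ × ℕ, c q ^ (-z) ≤
      (2 * Real.sqrt a) ^ (-z) *
        (((q.1 : ℝ) + 1) ^ (-(z / 2)) * ((q.2 : ℝ) + 1) ^ (-(z / 2))) := by
    intro q
    set m : ℝ := (q.1 : ℝ) + 1 with hm_def
    set n : ℝ := (q.2 : ℝ) + 1 with hn_def
    have hm : 0 < m := by positivity
    have hn : 0 < n := by positivity
    have hsqrt_pos : 0 < Real.sqrt (a * m * n) := Real.sqrt_pos.mpr (by positivity)
    have hAM : 2 * Real.sqrt (a * m * n) ≤ c q := by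
      have h1 : Real.sqrt (a * m * n) = Real.sqrt (a * m) * Real.sqrt n :=
        Real.sqrt_mul (by positivity) n
      have h2 := Real.sq_sqrt (show (0:ℝ) ≤ a * m by positivity)
      have h3 := Real.sq_sqrt hn.le
      have h4 := sq_nonneg (Real.sqrt (a * m) - Real.sqrt n)
      simp only [hc_def]
      nlinarith
    have hle : c q ^ (-z) ≤ (2 * Real.sqrt (a * m * n)) ^ (-z) :=
      Real.rpow_le_rpow_of_nonpos (by positivity) hAM (by linarith)
    refine hle.trans_eq ?_
    have hfac : 2 * Real.sqrt (a * m * n) =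
        (2 * Real.sqrt a) * (Real.sqrt m * Real.sqrt n) := by
      rw [Real.sqrt_mul (by positivity) n, Real.sqrt_mul ha.le m]; ring
    rw [hfac, Real.mul_rpow (by positivity) (by positivity),
      Real.mul_rpow (Real.sqrt_nonneg m) (Real.sqrt_nonneg n)]
    have hhalf : ∀ x : ℝ, 0 < x → (Real.sqrt x) ^ (-z) = x ^ (-(z / 2)) := by
      intro x hx
      rw [Real.sqrt_eq_rpow, ← Real.rpow_mul hx.le]
      congr 1
      ring
    rw [hhalf m hm, hhalf n hn]
  have hsum : Summable (fun q : ℕ × ℕ => c q ^ (-z)) :=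
    Summable.of_nonneg_of_le (fun q => Real.rpow_nonneg (hc q).le _) hbound
      (hprod.mul_left _)
  refine ⟨hsum, ?_⟩
  -- the integral representation
  have hΓ : 0 < Real.Gamma z := Real.Gamma_pos_of_pos hz0
  set F : ℕ × ℕ → ℝ → ℝ := fun q t => t ^ (z - 1) * Real.exp (-(c q * t)) with hF_def
  have hInt : ∀ q, MeasureTheory.IntegrableOn (F q) (Set.Ioi (0 : ℝ)) :=
    fun q => integrable_aux hz0 (hc q)
  have hIval : ∀ q, (∫ t in Set.Ioi (0 : ℝ), F q t) = Real.Gamma z * c q ^ (-z) := by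
    intro q
    rw [hF_def]
    rw [Real.integral_rpow_mul_exp_neg_mul_Ioi hz0 (hc q), one_div,
      Real.inv_rpow (hc q).le, ← Real.rpow_neg (hc q).le, mul_comm]
  have hNormEq : ∀ q, (∫ t in Set.Ioi (0 : ℝ), ‖F q t‖) = ∫ t in Set.Ioi (0 : ℝ), F q t := by
    intro q
    refine MeasureTheory.setIntegral_congr_fun measurableSet_Ioi (fun t ht => ?_)
    have ht0 : (0 : ℝ) < t := ht
    rw [Real.norm_eq_abs, abs_of_nonneg (by positivity)]
  have hNorm : Summable (fun q => ∫ t in Set.Ioi (0 : ℝ), ‖F q t‖) := by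
    simp_rw [hNormEq, hIval]
    exact hsum.mul_left _
  have hswap :
      ∑' q : ℕ × ℕ, (∫ t in Set.Ioi (0 : ℝ), F q t)
        = ∫ t in Set.Ioi (0 : ℝ), ∑' q : ℕ × ℕ, F q t :=
    MeasureTheory.integral_tsum_of_summable_integral_norm hInt hNorm
  -- pointwise identity
  have hpoint : ∀ t ∈ Set.Ioi (0 : ℝ),
      (∑' q : ℕ × ℕ, F q t)
        = t ^ (z - 1) / ((Real.exp (a * t) - 1) * (Real.exp t - 1)) := by
    intro t ht
    have ht0 : (0 : ℝ) < t := ht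
    have hS1 := geom_aux (show 0 < a * t by positivity)
    have hS2 := geom_aux ht0
    have hsummul : Summable (fun q : ℕ × ℕ =>
        Real.exp (-(a * t)) ^ (q.1 + 1) * Real.exp (-t) ^ (q.2 + 1)) :=
      hS1.summable.mul_of_nonneg hS2.summable
        (fun nn => pow_nonneg (Real.exp_pos _).le _)
        (fun nn => pow_nonneg (Real.exp_pos _).le _)
    have hP := hS1.mul hS2 hsummul
    have hterm : ∀ q : ℕ × ℕ, F q t =
        t ^ (z - 1) * (Real.exp (-(a * t)) ^ (q.1 + 1) * Real.exp (-t) ^ (q.2 + 1)) := by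
      intro q
      have h1 : Real.exp (-(a * t)) ^ (q.1 + 1) * Real.exp (-t) ^ (q.2 + 1)
          = Real.exp (-(c q * t)) := by
        rw [← Real.exp_nat_mul, ← Real.exp_nat_mul, ← Real.exp_add]
        congr 1
        simp only [hc_def]
        push_cast
        ring
      show t ^ (z - 1) * Real.exp (-(c q * t)) = _
      rw [h1]
    calc (∑' q : ℕ × ℕ, F q t)
        = ∑' q : ℕ × ℕ, t ^ (z - 1) *
            (Real.exp (-(a * t)) ^ (q.1 + 1) * Real.exp (-t) ^ (q.2 + 1)) :=
          tsum_congr hterm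
      _ = t ^ (z - 1) * (1 / (Real.exp (a * t) - 1) * (1 / (Real.exp t - 1))) := by
          rw [tsum_mul_left, hP.tsum_eq]
      _ = t ^ (z - 1) / ((Real.exp (a * t) - 1) * (Real.exp t - 1)) := by
          rw [div_mul_div_comm, one_mul, mul_one_div]
  calc (∑' q : ℕ × ℕ, c q ^ (-z))
      = (1 / Real.Gamma z) * ∑' q : ℕ × ℕ, Real.Gamma z * c q ^ (-z) := by
        rw [tsum_mul_left, ← mul_assoc, one_div, inv_mul_cancel₀ hΓ.ne', one_mul]
    _ = (1 / Real.Gamma z) * ∑' q : ℕ × ℕ, (∫ t in Set.Ioi (0 : ℝ), F q t) := by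
        simp_rw [hIval]
    _ = (1 / Real.Gamma z) * ∫ t in Set.Ioi (0 : ℝ), ∑' q : ℕ × ℕ, F q t := by
        rw [hswap]
    _ = (1 / Real.Gamma z) *
        ∫ t in Set.Ioi (0 : ℝ),
          t ^ (z - 1) / ((Real.exp (a * t) - 1) * (Real.exp t - 1)) := by
        rw [MeasureTheory.setIntegral_congr_fun measurableSet_Ioi hpoint]
end
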